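/- Let c, a₂₂, ω be nonzero reals and define f(u) = (1/(cω²))·log|cos(ωca₂₂u)| on an interval where cos(ωca₂₂u) ≠ 0. Then −f''(u)/(a₂₂² + (ωf'(u))²) = c for all u in that interval. -/

import Mathlib

/-- The Scherk-type function `f(u) = (1/(cω²))·log|cos(ωca₂₂u)|` satisfies
`−f''/(a₂₂² + (ωf')²) = c` wherever the cosine does not vanish. -/
theorem stmt4 (c a₂₂ ω : ℝ) (hc : c ≠ 0) (ha₂₂ : a₂₂ ≠ 0) (hω : ω ≠ 0)
    (f : ℝ → ℝ)
    (hfdef : f = fun u => (1 / (c * ω ^ 2)) * Real.log |Real.cos (ω * c * a₂₂ * u)|) :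
    ∀ u : ℝ, Real.cos (ω * c * a₂₂ * u) ≠ 0 →
      -(deriv (deriv f) u) / (a₂₂ ^ 2 + (ω * deriv f u) ^ 2) = c := by
  set a := ω * c * a₂₂ with ha
  set g : ℝ → ℝ := fun u => -(a₂₂ / ω) * (Real.sin (a * u) / Real.cos (a * u)) with hg
  have hfeq : f = fun u => (1 / (c * ω ^ 2)) * Real.log (Real.cos (a * u)) := by
    rw [hfdef]; funext u; rw [Real.log_abs]
  -- derivative of f
  have hf' : ∀ u : ℝ, Real.cos (a * u) ≠ 0 → HasDerivAt f (g u) u := by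
    intro u hu
    rw [hfeq]
    have h1 : HasDerivAt (fun x : ℝ => Real.cos (a * x)) (-Real.sin (a * u) * a) u := by
      simpa using ((hasDerivAt_id u).const_mul a).cos
    have h2 := (h1.log hu).const_mul (1 / (c * ω ^ 2))
    refine h2.congr_deriv ?_
    symm
    simp only [hg, ha]
    field_simp
  have hg' : ∀ u : ℝ, Real.cos (a * u) ≠ 0 →
      HasDerivAt g (-(c * a₂₂ ^ 2) / Real.cos (a * u) ^ 2) u := by
    intro u hu
    have hs : HasDerivAt (fun x : ℝ => Real.sin (a * x)) (Real.cos (a * u) * a) u := by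
      simpa using ((hasDerivAt_id u).const_mul a).sin
    have hcc : HasDerivAt (fun x : ℝ => Real.cos (a * x)) (-Real.sin (a * u) * a) u := by
      simpa using ((hasDerivAt_id u).const_mul a).cos
    have h := ((hs.div hcc hu).const_mul (-(a₂₂ / ω)))
    refine h.congr_deriv ?_
    symm
    have hpyth := Real.sin_sq_add_cos_sq (a * u)
    field_simp
    linear_combination (c * a₂₂ * ω) * hpyth
  intro u hu
  have hsopen : IsOpen {x : ℝ | Real.cos (a * x) ≠ 0} :=
    isOpen_compl_singleton.preimage (Real.continuous_cos.comp (continuous_const.mul continuous_id))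
  have hev : deriv f =ᶠ[nhds u] g := by
    filter_upwards [hsopen.mem_nhds hu] with x hx
    exact (hf' x hx).deriv
  have hd1 : deriv f u = g u := (hf' u hu).deriv
  have hd2 : deriv (deriv f) u = -(c * a₂₂ ^ 2) / Real.cos (a * u) ^ 2 := by
    rw [hev.deriv_eq]
    exact (hg' u hu).deriv
  rw [hd1, hd2]
  simp only [hg]
  have hpyth := Real.sin_sq_add_cos_sq (a * u)
  rw [div_eq_iff]
  · field_simp
    linear_combination (-1) * hpyth
  · have : a₂₂ ^ 2 + (ω * (-(a₂₂ / ω) * (Real.sin (a * u) / Real.cos (a * u)))) ^ 2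
        = a₂₂ ^ 2 / Real.cos (a * u) ^ 2 := by
      field_simp
      linear_combination hpyth
    rw [this]
    positivity
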